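/- arXiv:1912.10480 — 6 statements merged into one kernel-verified Lean document; each statement's English description precedes it below -/
import Mathlib

section
/- Let H and K be real Hilbert spaces, T : H → K a nonzero bounded linear operator with closed range and Moore–Penrose inverse T†, b ∈ K, and P : K → K a firmly nonexpansive map, i.e., ‖P u − P v‖²_K ≤ ⟨u − v, P u − P v⟩_K for all u, v ∈ K. Then the map A : H → H defined by A x := T†(P(T x + b)) is firmly nonexpansive with respect to the T-inner product: ‖A x − A y‖²_T ≤ ⟨x − y, A x − A y⟩_T for all x, y ∈ H. -/
open RealInnerProductSpace ContinuousLinearMap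

set_option maxHeartbeats 1000000 in
/-- Let `H, K` be real Hilbert spaces, `T : H → K` a nonzero bounded linear
operator with closed range and Moore–Penrose inverse `T†`, `b ∈ K`, and `P : K → K` firmly
nonexpansive. Then `A x := T†(P(T x + b))` is firmly nonexpansive with respect to the
`T`-inner product `⟨u, v⟩_T = ⟨Tu, Tv⟩/‖T‖² + ⟨u, P_N v⟩` (with `P_N` the orthogonal
projection onto `ker T`): `‖Ax − Ay‖²_T ≤ ⟨x − y, Ax − Ay⟩_T` for all `x, y ∈ H`. -/
theorem prox_affine_composition_firmly_nonexpansive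
    {H K : Type*} [NormedAddCommGroup H] [InnerProductSpace ℝ H] [CompleteSpace H]
    [NormedAddCommGroup K] [InnerProductSpace ℝ K] [CompleteSpace K]
    (T : H →L[ℝ] K) (hT : T ≠ 0) (hRange : IsClosed (LinearMap.range (T : H →ₗ[ℝ] K) : Set K))
    -- `Td` is the Moore–Penrose inverse of `T`:
    (Td : K →L[ℝ] H)
    (hMP1 : T ∘L Td ∘L T = T) (hMP2 : Td ∘L T ∘L Td = Td)
    (hMP3 : IsSelfAdjoint (T ∘L Td)) (hMP4 : IsSelfAdjoint (Td ∘L T))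
    -- `PN` is the orthogonal projection onto `ker T`:
    (PN : H →L[ℝ] H)
    (hPN_mem : ∀ x : H, T (PN x) = 0)
    (hPN_fix : ∀ x : H, T x = 0 → PN x = x)
    (hPN_orth : ∀ x y : H, T y = 0 → ⟪x - PN x, y⟫ = 0)
    (b : K) (P : K → K)
    (hP : ∀ u v : K, ‖P u - P v‖ ^ 2 ≤ ⟪u - v, P u - P v⟫)
    (A : H → H) (hA : ∀ x : H, A x = Td (P (T x + b))) :
    ∀ x y : H,
      ‖T (A x - A y)‖ ^ 2 / ‖T‖ ^ 2 + ‖PN (A x - A y)‖ ^ 2 ≤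
        ⟪T (x - y), T (A x - A y)⟫ / ‖T‖ ^ 2 + ⟪x - y, PN (A x - A y)⟫ := by

  intro x y
  set w : K := P (T x + b) - P (T y + b) with hw
  have hAxy : A x - A y = Td w := by rw [hA, hA, hw, map_sub]
  have hQsa : ∀ a c : K, ⟪(T ∘L Td) a, c⟫ = ⟪a, (T ∘L Td) c⟫ := fun a c =>
    hMP3.isSymmetric a c
  have hRsa : ∀ a c : H, ⟪(Td ∘L T) a, c⟫ = ⟪a, (Td ∘L T) c⟫ := fun a c =>
    hMP4.isSymmetric a c
  have horth : ∀ g : H, T g = 0 → ⟪Td w, g⟫ = 0 := by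
    intro g hg
    have h1 : (Td ∘L T) (Td w) = Td w := ContinuousLinearMap.ext_iff.mp hMP2 w
    calc ⟪Td w, g⟫ = ⟪(Td ∘L T) (Td w), g⟫ := by rw [h1]
      _ = ⟪Td w, (Td ∘L T) g⟫ := hRsa _ _
      _ = 0 := by
          simp only [ContinuousLinearMap.comp_apply, hg, map_zero, inner_zero_right]
  have hPN0 : PN (Td w) = 0 := by
    have h1 := hPN_orth (Td w) (PN (Td w)) (hPN_mem (Td w))
    have h2 := horth (PN (Td w)) (hPN_mem (Td w))
    rw [inner_sub_left] at h1
    have : ⟪PN (Td w), PN (Td w)⟫ = 0 := by linarith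
    exact inner_self_eq_zero.mp this
  rw [hAxy, hPN0]
  simp only [inner_zero_right, norm_zero]
  have hTnorm : (0:ℝ) < ‖T‖ ^ 2 := by
    have : ‖T‖ ≠ 0 := by simpa using hT
    positivity
  have hQidem : T (Td (T (Td w))) = T (Td w) := ContinuousLinearMap.ext_iff.mp hMP1 (Td w)
  have h1 : ‖T (Td w)‖ ^ 2 = ⟪w, T (Td w)⟫ := by
    rw [← real_inner_self_eq_norm_sq]
    calc ⟪T (Td w), T (Td w)⟫ = ⟪(T ∘L Td) w, T (Td w)⟫ := rfl
      _ = ⟪w, (T ∘L Td) (T (Td w))⟫ := hQsa _ _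
      _ = ⟪w, T (Td w)⟫ := by
          simp only [ContinuousLinearMap.comp_apply, hQidem]
  have hwle : ‖T (Td w)‖ ≤ ‖w‖ := by
    have hCS : ⟪w, T (Td w)⟫ ≤ ‖w‖ * ‖T (Td w)‖ := real_inner_le_norm _ _
    by_cases h0 : ‖T (Td w)‖ = 0
    · rw [h0]; exact norm_nonneg w
    · have hpos : 0 < ‖T (Td w)‖ := lt_of_le_of_ne (norm_nonneg _) (Ne.symm h0)
      have hmul : ‖T (Td w)‖ * ‖T (Td w)‖ ≤ ‖w‖ * ‖T (Td w)‖ := by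
        have : ‖T (Td w)‖ ^ 2 ≤ ‖w‖ * ‖T (Td w)‖ := h1.le.trans hCS
        nlinarith
      exact le_of_mul_le_mul_right hmul hpos
  have hfirm : ‖w‖ ^ 2 ≤ ⟪T (x - y), w⟫ := by
    have := hP (T x + b) (T y + b)
    have he : T x + b - (T y + b) = T (x - y) := by rw [map_sub]; abel
    rwa [he] at this
  have h2 : ⟪T (x - y), T (Td w)⟫ = ⟪T (x - y), w⟫ := by
    calc ⟪T (x - y), T (Td w)⟫ = ⟪T (x - y), (T ∘L Td) w⟫ := rfl
      _ = ⟪(T ∘L Td) (T (x - y)), w⟫ := (hQsa _ _).symm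
      _ = ⟪T (x - y), w⟫ := by
          rw [show (T ∘L Td) (T (x - y)) = T (x - y) from
            ContinuousLinearMap.ext_iff.mp hMP1 (x - y)]
  have key : ‖T (Td w)‖ ^ 2 ≤ ⟪T (x - y), T (Td w)⟫ := by
    rw [h2]
    have hsq : ‖T (Td w)‖ ^ 2 ≤ ‖w‖ ^ 2 := pow_le_pow_left₀ (norm_nonneg _) hwle 2
    linarith
  have hdiv : ‖T (Td w)‖ ^ 2 / ‖T‖ ^ 2 ≤ ⟪T (x - y), T (Td w)⟫ / ‖T‖ ^ 2 := by
    gcongr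
  simp only [ne_eq, OfNat.ofNat_ne_zero, not_false_eq_true, zero_pow]
  linarith
end

section
/- Let H and K be real Hilbert spaces and T : H → K a nonzero bounded linear operator with closed range and Moore–Penrose inverse T†. Then for all x ∈ H one has ‖x‖²_T ≤ 2‖x‖²_H and ‖x‖²_H ≤ (‖T†‖²‖T‖² + 1)‖x‖²_T, where ‖T‖ and ‖T†‖ denote operator norms; in particular the norms ‖·‖_H and ‖·‖_T are equivalent on H. -/
open RealInnerProductSpace ContinuousLinearMap

set_option maxHeartbeats 1000000 in
/-- Let `H, K` be real Hilbert spaces and `T : H → K` a nonzero bounded linear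
operator with closed range and Moore–Penrose inverse `T†`. Then for all `x ∈ H`,
`‖x‖²_T ≤ 2‖x‖²_H` and `‖x‖²_H ≤ (‖T†‖²‖T‖² + 1)‖x‖²_T`, where
`‖x‖²_T = ‖Tx‖²/‖T‖² + ‖P_N x‖²` with `P_N` the orthogonal projection onto `ker T`;
in particular, the norms `‖·‖_H` and `‖·‖_T` are equivalent on `H`. -/
theorem T_norm_equivalence
    {H K : Type*} [NormedAddCommGroup H] [InnerProductSpace ℝ H] [CompleteSpace H]
    [NormedAddCommGroup K] [InnerProductSpace ℝ K] [CompleteSpace K]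
    (T : H →L[ℝ] K) (hT : T ≠ 0) (hRange : IsClosed (LinearMap.range (T : H →ₗ[ℝ] K) : Set K))
    -- `Td` is the Moore–Penrose inverse of `T`:
    (Td : K →L[ℝ] H)
    (hMP1 : T ∘L Td ∘L T = T) (hMP2 : Td ∘L T ∘L Td = Td)
    (hMP3 : IsSelfAdjoint (T ∘L Td)) (hMP4 : IsSelfAdjoint (Td ∘L T))
    -- `PN` is the orthogonal projection onto `ker T`:
    (PN : H →L[ℝ] H)
    (hPN_mem : ∀ x : H, T (PN x) = 0)
    (hPN_fix : ∀ x : H, T x = 0 → PN x = x)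
    (hPN_orth : ∀ x y : H, T y = 0 → ⟪x - PN x, y⟫ = 0) :
    ∀ x : H,
      ‖T x‖ ^ 2 / ‖T‖ ^ 2 + ‖PN x‖ ^ 2 ≤ 2 * ‖x‖ ^ 2 ∧
      ‖x‖ ^ 2 ≤ (‖Td‖ ^ 2 * ‖T‖ ^ 2 + 1) * (‖T x‖ ^ 2 / ‖T‖ ^ 2 + ‖PN x‖ ^ 2) := by
  have hTpos : (0 : ℝ) < ‖T‖ := norm_pos_iff.mpr hT
  have hsym := hMP4.isSymmetric
  intro x
  -- Key: x - PN x = Td (T x)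
  have hkey : x - PN x = Td (T x) := by
    set d : H := x - PN x - Td (T x) with hd
    have hTd0 : T d = 0 := by
      have h1 : T (Td (T x)) = T x := congrFun (congrArg DFunLike.coe hMP1) x
      simp [hd, map_sub, hPN_mem x, h1]
    have h2 : ⟪x - PN x, d⟫ = 0 := hPN_orth x d hTd0
    have h3 : ⟪Td (T x), d⟫ = 0 := by
      have h := hsym x d
      simp only [ContinuousLinearMap.coe_coe, ContinuousLinearMap.comp_apply] at h
      rw [h, hTd0]
      simp
    have hdd : ⟪d, d⟫ = 0 := by
      have : ⟪d, d⟫ = ⟪x - PN x, d⟫ - ⟪Td (T x), d⟫ := by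
        rw [hd, inner_sub_left]
      rw [this, h2, h3]; ring
    have hd0 : d = 0 := inner_self_eq_zero (𝕜 := ℝ).mp hdd
    have := sub_eq_zero.mp hd0
    exact this
  -- Pythagoras: ‖x‖² = ‖x - PN x‖² + ‖PN x‖²
  have hpyth : ‖x‖ ^ 2 = ‖x - PN x‖ ^ 2 + ‖PN x‖ ^ 2 := by
    have h0 : ⟪x - PN x, PN x⟫ = 0 := hPN_orth x (PN x) (hPN_mem x)
    have := norm_add_sq_real (x - PN x) (PN x)
    simp only [sub_add_cancel, h0] at this
    linarith
  have hT1 : ‖T x‖ ≤ ‖T‖ * ‖x‖ := T.le_opNorm x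
  have hTd1 : ‖Td (T x)‖ ≤ ‖Td‖ * ‖T x‖ := Td.le_opNorm (T x)
  have hTx2 : ‖T x‖ ^ 2 ≤ ‖T‖ ^ 2 * ‖x‖ ^ 2 := by
    have h := mul_self_le_mul_self (norm_nonneg _) hT1
    nlinarith [norm_nonneg (T x), norm_nonneg x]
  have hdiv : ‖T x‖ ^ 2 / ‖T‖ ^ 2 ≤ ‖x‖ ^ 2 := by
    rw [div_le_iff₀ (by positivity)]
    linarith [hTx2]
  have hPNle : ‖PN x‖ ^ 2 ≤ ‖x‖ ^ 2 := by nlinarith [sq_nonneg ‖x - PN x‖]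
  constructor
  · linarith
  · have hsub : ‖x - PN x‖ ^ 2 ≤ ‖Td‖ ^ 2 * ‖T x‖ ^ 2 := by
      rw [hkey]
      calc ‖Td (T x)‖ ^ 2 ≤ (‖Td‖ * ‖T x‖) ^ 2 := pow_le_pow_left₀ (norm_nonneg _) hTd1 2
        _ = ‖Td‖ ^ 2 * ‖T x‖ ^ 2 := by ring
    have e1 : ‖Td‖ ^ 2 * ‖T x‖ ^ 2 = (‖Td‖ ^ 2 * ‖T‖ ^ 2) * (‖T x‖ ^ 2 / ‖T‖ ^ 2) := by
      field_simp
    have ha : 0 ≤ ‖T x‖ ^ 2 / ‖T‖ ^ 2 := div_nonneg (sq_nonneg _) (sq_nonneg _)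
    have hcb : 0 ≤ ‖Td‖ ^ 2 * ‖T‖ ^ 2 * ‖PN x‖ ^ 2 :=
      mul_nonneg (mul_nonneg (sq_nonneg _) (sq_nonneg _)) (sq_nonneg _)
    have h1 : ‖x‖ ^ 2 ≤ (‖Td‖ ^ 2 * ‖T‖ ^ 2) * (‖T x‖ ^ 2 / ‖T‖ ^ 2) + ‖PN x‖ ^ 2 := by
      rw [← e1]; linarith
    have h2 : (‖Td‖ ^ 2 * ‖T‖ ^ 2 + 1) * (‖T x‖ ^ 2 / ‖T‖ ^ 2 + ‖PN x‖ ^ 2)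
        = (‖Td‖ ^ 2 * ‖T‖ ^ 2) * (‖T x‖ ^ 2 / ‖T‖ ^ 2) + ‖Td‖ ^ 2 * ‖T‖ ^ 2 * ‖PN x‖ ^ 2
          + ‖T x‖ ^ 2 / ‖T‖ ^ 2 + ‖PN x‖ ^ 2 := by ring
    rw [h2]
    linarith
end

section
/- Let H be a real Hilbert space and ℓ² the Hilbert space of square-summable real sequences indexed by ℕ with canonical unit vectors (δ_k)_{k∈ℕ}. A bounded linear operator T : ℓ² → H is surjective if and only if the sequence (T δ_k)_{k∈ℕ} is a frame of H, i.e., there exist constants 0 < A ≤ B < ∞ such that A‖x‖²_H ≤ Σ_{k∈ℕ} ⟨x, T δ_k⟩²_H ≤ B‖x‖²_H for all x ∈ H. -/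
set_option maxHeartbeats 1000000

open RealInnerProductSpace

lemma tsum_inner_single_eq_norm_adjoint_sq
    {H : Type*} [NormedAddCommGroup H] [InnerProductSpace ℝ H] [CompleteSpace H]
    (T : lp (fun _ : ℕ => ℝ) 2 →L[ℝ] H) (x : H) :
    ∑' k : ℕ, ⟪x, T (lp.single 2 k 1)⟫ ^ 2 = ‖ContinuousLinearMap.adjoint T x‖ ^ 2 := by
  set f := ContinuousLinearMap.adjoint T x with hf
  have h1 : ∀ k : ℕ, ⟪x, T (lp.single 2 k 1)⟫ = f k := by
    intro k
    rw [← ContinuousLinearMap.adjoint_inner_left, ← hf]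
    have := lp.inner_single_right (𝕜 := ℝ) (G := fun _ : ℕ => ℝ) k (1 : ℝ) f
    simpa using this
  have h2 : ⟪f, f⟫ = ∑' k : ℕ, (f k) ^ 2 := by
    rw [lp.inner_eq_tsum]
    congr 1
    ext k
    rw [real_inner_self_eq_norm_sq, Real.norm_eq_abs, sq_abs]
  rw [← real_inner_self_eq_norm_sq, h2]
  congr 1
  ext k
  rw [h1 k]

/-- Let `H` be a real Hilbert space and `ℓ²` the space of square-summable real
sequences with canonical unit vectors `δ_k`. A bounded linear operator `T : ℓ² → H` is
surjective if and only if `(T δ_k)_k` is a frame of `H`, i.e. there are constants `0 < A ≤ B`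
with `A‖x‖² ≤ Σ_k ⟨x, T δ_k⟩² ≤ B‖x‖²` for all `x ∈ H`. -/
theorem surjective_iff_synthesis_operator_of_frame
    {H : Type*} [NormedAddCommGroup H] [InnerProductSpace ℝ H] [CompleteSpace H]
    (T : lp (fun _ : ℕ => ℝ) 2 →L[ℝ] H) :
    Function.Surjective T ↔
    ∃ A B : ℝ, 0 < A ∧ A ≤ B ∧
      ∀ x : H, A * ‖x‖ ^ 2 ≤ ∑' k : ℕ, ⟪x, T (lp.single 2 k 1)⟫ ^ 2 ∧
        ∑' k : ℕ, ⟪x, T (lp.single 2 k 1)⟫ ^ 2 ≤ B * ‖x‖ ^ 2 := by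
  set S := ContinuousLinearMap.adjoint T with hS
  constructor
  · intro hsurj
    obtain ⟨C, hCpos, hC⟩ := T.exists_preimage_norm_le hsurj
    refine ⟨C⁻¹ ^ 2, ‖S‖ ^ 2 + C⁻¹ ^ 2, by positivity, by nlinarith [norm_nonneg S], ?_⟩
    intro x
    rw [tsum_inner_single_eq_norm_adjoint_sq, ← hS]
    constructor
    · -- lower bound : ‖x‖ ≤ C * ‖S x‖
      obtain ⟨z, hz, hznorm⟩ := hC x
      have key : ‖x‖ ^ 2 ≤ C * ‖S x‖ * ‖x‖ := by
        have : (‖x‖ : ℝ) ^ 2 = ⟪x, T z⟫ := by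
          rw [hz, real_inner_self_eq_norm_sq]
        rw [this, ← ContinuousLinearMap.adjoint_inner_left, ← hS]
        calc ⟪S x, z⟫ ≤ ‖S x‖ * ‖z‖ := real_inner_le_norm _ _
          _ ≤ ‖S x‖ * (C * ‖x‖) := by
              have := norm_nonneg (S x); nlinarith
          _ = C * ‖S x‖ * ‖x‖ := by ring
      have hx : ‖x‖ ≤ C * ‖S x‖ := by
        rcases eq_or_lt_of_le (norm_nonneg x) with h | h
        · rw [← h]; positivity
        · nlinarith
      have hCi : C⁻¹ * ‖x‖ ≤ ‖S x‖ := by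
        rw [inv_mul_le_iff₀ hCpos]; linarith
      have h0 : 0 ≤ C⁻¹ * ‖x‖ := by positivity
      calc C⁻¹ ^ 2 * ‖x‖ ^ 2 = (C⁻¹ * ‖x‖) ^ 2 := by ring
        _ ≤ ‖S x‖ ^ 2 := by nlinarith
    · have h1 : ‖S x‖ ≤ ‖S‖ * ‖x‖ := S.le_opNorm x
      have h2 : (0:ℝ) ≤ ‖S‖ * ‖x‖ := by positivity
      nlinarith [norm_nonneg (S x), sq_nonneg ‖x‖, sq_nonneg (C⁻¹)]
  · rintro ⟨A, B, hA, hAB, hframe⟩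
    -- Let P := T ∘ S; then ⟪P x, x⟫ = ‖S x‖² ≥ A ‖x‖².
    set P := T.comp S with hP
    have hinner : ∀ x : H, ⟪x, P x⟫ = ‖S x‖ ^ 2 := by
      intro x
      rw [hP, ContinuousLinearMap.comp_apply, ← ContinuousLinearMap.adjoint_inner_left, ← hS,
        real_inner_self_eq_norm_sq]
    have hlow : ∀ x : H, A * ‖x‖ ^ 2 ≤ ⟪x, P x⟫ := by
      intro x
      rw [hinner]
      have := (hframe x).1
      rwa [tsum_inner_single_eq_norm_adjoint_sq, ← hS] at this
    -- P is bounded below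
    have hbelow : ∀ x : H, ‖x‖ ≤ (⟨A⁻¹, by positivity⟩ : NNReal) * ‖P x‖ := by
      intro x
      have h1 : A * ‖x‖ ^ 2 ≤ ‖x‖ * ‖P x‖ := le_trans (hlow x) (real_inner_le_norm _ _)
      have hx : A * ‖x‖ ≤ ‖P x‖ := by
        rcases eq_or_lt_of_le (norm_nonneg x) with h | h
        · rw [← h]; simpa using norm_nonneg (P x)
        · nlinarith
      have : ‖x‖ ≤ A⁻¹ * ‖P x‖ := by
        rw [le_inv_mul_iff₀ hA]; linarith
      simpa using this
    have hanti : AntilipschitzWith _ P := P.antilipschitz_of_bound hbelow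
    have hclosed : IsClosed (Set.range P) := hanti.isClosed_range P.uniformContinuous
    have hclosed' : IsClosed ((LinearMap.range (P : H →ₗ[ℝ] H) : Submodule ℝ H) : Set H) := by
      simpa [LinearMap.coe_range] using hclosed
    haveI : CompleteSpace (LinearMap.range (P : H →ₗ[ℝ] H) : Submodule ℝ H) := hclosed'.completeSpace_coe
    have horth : (LinearMap.range (P : H →ₗ[ℝ] H) : Submodule ℝ H)ᗮ = ⊥ := by
      rw [Submodule.eq_bot_iff]
      intro y hy
      have h0 : ⟪y, P y⟫ = 0 := by
        have := hy (P y) (LinearMap.mem_range_self _ y)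
        rwa [real_inner_comm] at this
      have := hlow y
      rw [h0] at this
      have : ‖y‖ ^ 2 ≤ 0 := by nlinarith
      have : ‖y‖ = 0 := by nlinarith [sq_nonneg ‖y‖, norm_nonneg y]
      simpa using this
    have htop : (LinearMap.range (P : H →ₗ[ℝ] H) : Submodule ℝ H) = ⊤ :=
      Submodule.orthogonal_eq_bot_iff.mp horth
    intro y
    have : y ∈ LinearMap.range (P : H →ₗ[ℝ] H) := htop ▸ Submodule.mem_top
    obtain ⟨z, hz⟩ := this
    exact ⟨S z, hz⟩
end

section
/- Let T : H → ℓ² be a bounded linear, injective operator with closed range (i.e., the analysis operator of a frame of the real Hilbert space H), with Moore–Penrose inverse T†, and let λ > 0. Define f : H → ℝ ∪ {+∞} by f(y) := (1/‖T‖²)·inf{ λ‖T y − z‖_{ℓ¹} + ½‖z‖²_{ℓ²} : z ∈ ker T* }, where ‖c‖_{ℓ¹} = Σ_k |c_k| (with value +∞ if not summable). Then for every x ∈ H the point T†(S_λ(T x)) is the unique minimizer over y ∈ H of ½‖x − y‖²_T + f(y). -/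
open RealInnerProductSpace ContinuousLinearMap
open scoped ENNReal NNReal

/-- Soft shrinkage on `ℝ`. -/
noncomputable def softShrink (lam x : ℝ) : ℝ :=
  if x > lam then x - lam else if x < -lam then x + lam else 0

/-- The `ℓ¹`-"norm" of a square-summable sequence, with value `+∞` if not summable. -/
noncomputable def l1NormE (c : lp (fun _ : ℕ => ℝ) 2) : EReal :=
  ((∑' k : ℕ, (‖(c : ∀ _ : ℕ, ℝ) k‖₊ : ℝ≥0∞) : ℝ≥0∞) : EReal)

lemma softShrink_key (lam t s : ℝ) (hlam : 0 < lam) :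
    2⁻¹*(t - softShrink lam t)^2 + lam*|softShrink lam t| + 2⁻¹*(s - softShrink lam t)^2
      ≤ 2⁻¹*(t-s)^2 + lam*|s| := by
  unfold softShrink
  split_ifs with h1 h2
  · rw [abs_of_pos (by linarith)]
    nlinarith [mul_nonneg hlam.le (sub_nonneg.2 (le_abs_self s))]
  · rw [abs_of_neg (by linarith)]
    nlinarith [mul_nonneg hlam.le (by linarith [neg_abs_le s] : (0:ℝ) ≤ |s| + s)]
  · rw [abs_zero]
    have ht1 : t ≤ lam := not_lt.1 h1
    have ht2 : -lam ≤ t := not_lt.1 h2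
    nlinarith [mul_nonneg (by linarith : (0:ℝ) ≤ lam - t) (by linarith [neg_abs_le s] : (0:ℝ) ≤ |s| + s),
      mul_nonneg (by linarith : (0:ℝ) ≤ lam + t) (by linarith [le_abs_self s] : (0:ℝ) ≤ |s| - s)]

lemma softShrink_abs_le (lam t : ℝ) (hlam : 0 < lam) : |softShrink lam t| ≤ t^2 / lam := by
  unfold softShrink
  split_ifs with h1 h2
  · rw [abs_of_pos (by linarith), le_div_iff₀ hlam]; nlinarith [sq_nonneg (t - lam)]
  · rw [abs_of_neg (by linarith), le_div_iff₀ hlam]; nlinarith [sq_nonneg (t + lam)]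
  · rw [abs_zero]; positivity

lemma lp2_summable_sq (w : lp (fun _ : ℕ => ℝ) 2) :
    Summable fun k => ((w : ∀ _ : ℕ, ℝ) k)^2 := by
  have := (lp.memℓp w).summable (p := 2) (by norm_num)
  simpa [Real.rpow_natCast, ← sq_abs] using this

lemma lp2_norm_sq (w : lp (fun _ : ℕ => ℝ) 2) :
    ‖w‖^2 = ∑' k, ((w : ∀ _ : ℕ, ℝ) k)^2 := by
  have := lp.norm_rpow_eq_tsum (p := 2) (by norm_num) w
  simpa [Real.rpow_natCast, ← sq_abs] using this

lemma l1NormE_eq_coe (v : lp (fun _ : ℕ => ℝ) 2)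
    (h : Summable fun k => |(v : ∀ _ : ℕ, ℝ) k|) :
    l1NormE v = ((∑' k, |(v : ∀ _ : ℕ, ℝ) k| : ℝ) : EReal) := by
  unfold l1NormE
  have h' : Summable fun k => ‖(v : ∀ _ : ℕ, ℝ) k‖₊ := by
    rw [← NNReal.summable_coe]
    simpa [Real.norm_eq_abs] using h
  rw [← ENNReal.coe_tsum h', EReal.coe_nnreal_eq_coe_real]
  congr 1
  rw [NNReal.coe_tsum]
  simp [Real.norm_eq_abs]

lemma l1NormE_eq_top (v : lp (fun _ : ℕ => ℝ) 2)
    (h : ¬ Summable fun k => |(v : ∀ _ : ℕ, ℝ) k|) :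
    l1NormE v = ⊤ := by
  unfold l1NormE
  have h' : ¬ Summable fun k => ‖(v : ∀ _ : ℕ, ℝ) k‖₊ := by
    rw [← NNReal.summable_coe]
    simpa [Real.norm_eq_abs] using h
  rw [← ENNReal.tsum_coe_ne_top_iff_summable, not_not] at h'
  rw [h', EReal.coe_ennreal_top]

set_option maxHeartbeats 1000000 in
/-- Let `T : H → ℓ²` be a bounded linear injective operator with closed range
(the analysis operator of a frame of `H`) with Moore–Penrose inverse `T†`, and `λ > 0`.
With `f(y) := (1/‖T‖²)·inf{ λ‖Ty − z‖₁ + ½‖z‖²_{ℓ²} : z ∈ ker T* }`, for every `x ∈ H` the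
point `T†(S_λ(Tx))` is the unique minimizer over `y ∈ H` of `½‖x − y‖²_T + f(y)`, where
(since `T` is injective) `‖u‖²_T = ‖Tu‖²/‖T‖²` and `S_λ` is the componentwise soft
shrinkage. -/
theorem frame_soft_shrinkage_is_prox
    {H : Type*} [NormedAddCommGroup H] [InnerProductSpace ℝ H] [CompleteSpace H]
    (T : H →L[ℝ] lp (fun _ : ℕ => ℝ) 2) (hT : T ≠ 0)
    (hInj : Function.Injective T)
    (hRange : IsClosed (LinearMap.range (T : H →ₗ[ℝ] lp (fun _ : ℕ => ℝ) 2) : Set (lp (fun _ : ℕ => ℝ) 2)))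
    -- `Td` is the Moore–Penrose inverse of `T`:
    (Td : lp (fun _ : ℕ => ℝ) 2 →L[ℝ] H)
    (hMP1 : T ∘L Td ∘L T = T) (hMP2 : Td ∘L T ∘L Td = Td)
    (hMP3 : IsSelfAdjoint (T ∘L Td)) (hMP4 : IsSelfAdjoint (Td ∘L T))
    (lam : ℝ) (hlam : 0 < lam)
    -- `Sc` is the componentwise soft shrinkage on `ℓ²`:
    (Sc : lp (fun _ : ℕ => ℝ) 2 → lp (fun _ : ℕ => ℝ) 2)
    (hSc : ∀ (c : lp (fun _ : ℕ => ℝ) 2) (k : ℕ),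
      (Sc c : ∀ _ : ℕ, ℝ) k = softShrink lam ((c : ∀ _ : ℕ, ℝ) k))
    -- the function `f`:
    (f : H → EReal)
    (hf : ∀ y : H, f y = (((‖T‖ ^ 2)⁻¹ : ℝ) : EReal) *
      ⨅ z ∈ LinearMap.ker ((adjoint T : lp (fun _ : ℕ => ℝ) 2 →ₗ[ℝ] H)),
        ((lam : EReal) * l1NormE (T y - z) + ((2⁻¹ * ‖z‖ ^ 2 : ℝ) : EReal)))
    -- the objective `F x y = ½‖x − y‖²_T + f(y)`:
    (F : H → H → EReal)
    (hF : ∀ x y : H, F x y = ((2⁻¹ * (‖T (x - y)‖ ^ 2 / ‖T‖ ^ 2) : ℝ) : EReal) + f y) :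
    ∀ x : H,
      (∀ y : H, F x (Td (Sc (T x))) ≤ F x y) ∧
      (∀ y : H, F x y ≤ F x (Td (Sc (T x))) → y = Td (Sc (T x))) := by
  intro x
  set K := LinearMap.ker ((adjoint T : lp (fun _ : ℕ => ℝ) 2 →ₗ[ℝ] H)) with hK
  -- basic constants
  have hTnorm : (0:ℝ) < ‖T‖ := norm_pos_iff.2 hT
  set c : ℝ := (‖T‖ ^ 2)⁻¹ with hc_def
  have hc : 0 < c := by positivity
  -- notation
  set u : lp (fun _ : ℕ => ℝ) 2 := Sc (T x) with hu_def
  set ystar : H := Td u with hystar_def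
  set zstar : lp (fun _ : ℕ => ℝ) 2 := T ystar - u with hzstar_def
  have hu_eq : T ystar - zstar = u := by rw [hzstar_def]; abel
  -- P = T ∘L Td facts
  have hPT : ∀ w : H, T (Td (T w)) = T w := by
    intro w
    have := ContinuousLinearMap.ext_iff.1 hMP1 w
    simpa using this
  have hPsa : ∀ (a b : lp (fun _ : ℕ => ℝ) 2), ⟪T (Td a), b⟫ = ⟪a, T (Td b)⟫ := by
    intro a b
    have := hMP3.isSymmetric a b
    simpa using this
  -- orthogonality to the kernel of the adjoint
  have orth : ∀ z ∈ K, ∀ w : H, ⟪T w, z⟫ = 0 := by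
    intro z hz w
    have hz0 : adjoint T z = 0 := hz
    rw [← adjoint_inner_right T w z, hz0, inner_zero_right]
  have hzstarK : zstar ∈ K := by
    have h0 : adjoint T zstar = 0 := by
      have : ∀ w : H, ⟪T w, zstar⟫ = 0 := by
        intro w
        rw [hzstar_def, inner_sub_right, hystar_def]
        rw [← hPsa (T w) u, hPT w]
        ring
      have h1 : ⟪adjoint T zstar, adjoint T zstar⟫ = 0 := by
        rw [adjoint_inner_right, this]
      exact inner_self_eq_zero.1 h1
    exact h0
  -- Pythagoras
  have pyth : ∀ (w : H), ∀ z ∈ K, ‖T w + z‖^2 = ‖T w‖^2 + ‖z‖^2 := by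
    intro w z hz
    rw [norm_add_sq_real, orth z hz w]
    ring
  -- components
  have hucomp : ∀ k : ℕ, (u : ∀ _ : ℕ, ℝ) k = softShrink lam ((T x : ∀ _ : ℕ, ℝ) k) := by
    intro k; rw [hu_def]; exact hSc (T x) k
  -- ℓ¹ summability of u
  have husum : Summable fun k => |(u : ∀ _ : ℕ, ℝ) k| := by
    refine Summable.of_nonneg_of_le (fun k => abs_nonneg _)
      (fun k => ?_) ((lp2_summable_sq (T x)).div_const lam)
    rw [hucomp k]
    exact softShrink_abs_le lam _ hlam
  set L : ℝ := ∑' k, |(u : ∀ _ : ℕ, ℝ) k| with hL_def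
  set A : ℝ := 2⁻¹ * ‖T x - u‖^2 + lam * L with hA_def
  -- identity (a)
  have idA : ∀ (y : H), ∀ z ∈ K, ‖T x - (T y - z)‖^2 = ‖T (x - y)‖^2 + ‖z‖^2 := by
    intro y z hz
    have : T x - (T y - z) = T (x - y) + z := by rw [map_sub]; abel
    rw [this, pyth (x - y) z hz]
  -- identity (b)
  have idB : ∀ (y : H), ∀ z ∈ K, ‖(T y - z) - u‖^2 = ‖T (y - ystar)‖^2 + ‖zstar - z‖^2 := by
    intro y z hz
    have h1 : (T y - z) - u = T (y - ystar) + (zstar - z) := by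
      rw [map_sub, hzstar_def]; abel
    rw [h1, pyth (y - ystar) (zstar - z) (K.sub_mem hzstarK hz)]
  -- core real inequality
  have corereal : ∀ v : lp (fun _ : ℕ => ℝ) 2, (Summable fun k => |(v : ∀ _ : ℕ, ℝ) k|) →
      2⁻¹ * ‖T x - u‖^2 + lam * L + 2⁻¹ * ‖v - u‖^2
        ≤ 2⁻¹ * ‖T x - v‖^2 + lam * ∑' k, |(v : ∀ _ : ℕ, ℝ) k| := by
    intro v hv
    set t : ℕ → ℝ := fun k => (T x : ∀ _ : ℕ, ℝ) k with ht_def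
    set σ : ℕ → ℝ := fun k => (u : ∀ _ : ℕ, ℝ) k with hσ_def
    set w : ℕ → ℝ := fun k => (v : ∀ _ : ℕ, ℝ) k with hw_def
    have hsub1 : ∀ k, ((T x - u : lp (fun _ : ℕ => ℝ) 2) : ∀ _ : ℕ, ℝ) k = t k - σ k := by
      intro k; rw [lp.coeFn_sub]; rfl
    have hsub2 : ∀ k, ((v - u : lp (fun _ : ℕ => ℝ) 2) : ∀ _ : ℕ, ℝ) k = w k - σ k := by
      intro k; rw [lp.coeFn_sub]; rfl
    have hsub3 : ∀ k, ((T x - v : lp (fun _ : ℕ => ℝ) 2) : ∀ _ : ℕ, ℝ) k = t k - w k := by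
      intro k; rw [lp.coeFn_sub]; rfl
    have s1 : Summable fun k => (t k - σ k)^2 := by
      have := lp2_summable_sq (T x - u)
      simpa [hsub1] using this
    have s2 : Summable fun k => (w k - σ k)^2 := by
      have := lp2_summable_sq (v - u)
      simpa [hsub2] using this
    have s3 : Summable fun k => (t k - w k)^2 := by
      have := lp2_summable_sq (T x - v)
      simpa [hsub3] using this
    have n1 : ‖T x - u‖^2 = ∑' k, (t k - σ k)^2 := by
      rw [lp2_norm_sq]; exact tsum_congr fun k => by rw [hsub1]
    have n2 : ‖v - u‖^2 = ∑' k, (w k - σ k)^2 := by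
      rw [lp2_norm_sq]; exact tsum_congr fun k => by rw [hsub2]
    have n3 : ‖T x - v‖^2 = ∑' k, (t k - w k)^2 := by
      rw [lp2_norm_sq]; exact tsum_congr fun k => by rw [hsub3]
    have sg : Summable fun k => 2⁻¹*(t k - σ k)^2 + lam*|σ k| + 2⁻¹*(w k - σ k)^2 :=
      (((s1.mul_left 2⁻¹).add (husum.mul_left lam)).add (s2.mul_left 2⁻¹))
    have sh : Summable fun k => 2⁻¹*(t k - w k)^2 + lam*|w k| :=
      (s3.mul_left 2⁻¹).add (hv.mul_left lam)
    have key : ∀ k, 2⁻¹*(t k - σ k)^2 + lam*|σ k| + 2⁻¹*(w k - σ k)^2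
        ≤ 2⁻¹*(t k - w k)^2 + lam*|w k| := by
      intro k
      have := softShrink_key lam (t k) (w k) hlam
      rw [hσ_def]
      simp only [hucomp k]
      exact this
    have main := Summable.tsum_le_tsum key sg sh
    rw [Summable.tsum_add ((s1.mul_left 2⁻¹).add (husum.mul_left lam)) (s2.mul_left 2⁻¹),
      Summable.tsum_add (s1.mul_left 2⁻¹) (husum.mul_left lam),
      Summable.tsum_add (s3.mul_left 2⁻¹) (hv.mul_left lam),
      tsum_mul_left, tsum_mul_left, tsum_mul_left, tsum_mul_left, tsum_mul_left] at main
    rw [n1, n2, n3]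
    rw [hL_def]
    linarith [main]
  -- the EReal lower bound on the infimum terms
  have hlow : ∀ (y : H), ∀ z ∈ K,
      ((A + 2⁻¹ * ‖T (y - ystar)‖^2 - 2⁻¹ * ‖T (x - y)‖^2 : ℝ) : EReal)
        ≤ (lam : EReal) * l1NormE (T y - z) + ((2⁻¹ * ‖z‖ ^ 2 : ℝ) : EReal) := by
    intro y z hz
    by_cases hvs : Summable fun k => |((T y - z : lp (fun _ : ℕ => ℝ) 2) : ∀ _ : ℕ, ℝ) k|
    · rw [l1NormE_eq_coe _ hvs, ← EReal.coe_mul, ← EReal.coe_add, EReal.coe_le_coe_iff]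
      have hcore := corereal (T y - z) hvs
      have ha := idA y z hz
      have hb := idB y z hz
      have hnn : (0:ℝ) ≤ ‖zstar - z‖^2 := sq_nonneg _
      rw [hA_def]
      linarith [hcore, ha, hb]
    · rw [l1NormE_eq_top _ hvs, EReal.coe_mul_top_of_pos hlam, EReal.top_add_coe]
      exact le_top
  -- lower bound on F
  have hFlow : ∀ y : H, ((c * (A + 2⁻¹ * ‖T (y - ystar)‖^2) : ℝ) : EReal) ≤ F x y := by
    intro y
    rw [hF x y, hf y]
    have hJ : ((A + 2⁻¹ * ‖T (y - ystar)‖^2 - 2⁻¹ * ‖T (x - y)‖^2 : ℝ) : EReal)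
        ≤ ⨅ z ∈ K, ((lam : EReal) * l1NormE (T y - z) + ((2⁻¹ * ‖z‖ ^ 2 : ℝ) : EReal)) :=
      le_iInf₂ (hlow y)
    have hmul := mul_le_mul_of_nonneg_left hJ (by exact_mod_cast hc.le :
      (0:EReal) ≤ ((c : ℝ) : EReal))
    calc ((c * (A + 2⁻¹ * ‖T (y - ystar)‖^2) : ℝ) : EReal)
        = ((2⁻¹ * (‖T (x - y)‖ ^ 2 / ‖T‖ ^ 2) : ℝ) : EReal)
          + ((c:ℝ) : EReal) * ((A + 2⁻¹ * ‖T (y - ystar)‖^2 - 2⁻¹ * ‖T (x - y)‖^2 : ℝ) : EReal) := by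
          rw [← EReal.coe_mul, ← EReal.coe_add, EReal.coe_eq_coe_iff, hc_def]
          ring
      _ ≤ _ := by exact add_le_add_right hmul _
  -- upper bound at ystar
  have hFstar_le : F x ystar ≤ ((c * A : ℝ) : EReal) := by
    rw [hF x ystar, hf ystar]
    have hJle : (⨅ z ∈ K, ((lam : EReal) * l1NormE (T ystar - z) + ((2⁻¹ * ‖z‖ ^ 2 : ℝ) : EReal)))
        ≤ (lam : EReal) * l1NormE (T ystar - zstar) + ((2⁻¹ * ‖zstar‖ ^ 2 : ℝ) : EReal) :=
      iInf₂_le zstar hzstarK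
    rw [hu_eq, l1NormE_eq_coe u husum, ← hL_def, ← EReal.coe_mul, ← EReal.coe_add] at hJle
    have hmul := mul_le_mul_of_nonneg_left hJle (by exact_mod_cast hc.le :
      (0:EReal) ≤ ((c : ℝ) : EReal))
    calc ((2⁻¹ * (‖T (x - ystar)‖ ^ 2 / ‖T‖ ^ 2) : ℝ) : EReal)
          + ((c:ℝ) : EReal) * (⨅ z ∈ K, ((lam : EReal) * l1NormE (T ystar - z)
            + ((2⁻¹ * ‖z‖ ^ 2 : ℝ) : EReal)))
        ≤ ((2⁻¹ * (‖T (x - ystar)‖ ^ 2 / ‖T‖ ^ 2) : ℝ) : EReal)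
          + ((c:ℝ) : EReal) * ((lam * L + 2⁻¹ * ‖zstar‖ ^ 2 : ℝ) : EReal) := by
          exact add_le_add_right hmul _
      _ = ((2⁻¹ * (‖T (x - ystar)‖ ^ 2 / ‖T‖ ^ 2) + c * (lam * L + 2⁻¹ * ‖zstar‖ ^ 2) : ℝ) : EReal) := by
          rw [← EReal.coe_mul, ← EReal.coe_add]
      _ = ((c * A : ℝ) : EReal) := by
          rw [EReal.coe_eq_coe_iff]
          have ha : ‖T x - (T ystar - zstar)‖^2 = ‖T (x - ystar)‖^2 + ‖zstar‖^2 :=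
            idA ystar zstar hzstarK
          rw [hu_eq] at ha
          rw [hA_def, ha, hc_def]
          have hT2 : ‖T‖ ^ 2 ≠ 0 := by positivity
          field_simp
          ring
  -- value at ystar
  have hFstar : F x ystar = ((c * A : ℝ) : EReal) := by
    refine le_antisymm hFstar_le ?_
    have := hFlow ystar
    simpa using this
  constructor
  · intro y
    rw [hFstar]
    refine le_trans ?_ (hFlow y)
    rw [EReal.coe_le_coe_iff]
    nlinarith [mul_nonneg hc.le (sq_nonneg ‖T (y - ystar)‖)]
  · intro y hy
    rw [hFstar] at hy
    have h1 := (hFlow y).trans hy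
    rw [EReal.coe_le_coe_iff] at h1
    have hs := sq_nonneg ‖T (y - ystar)‖
    have h2 : ‖T (y - ystar)‖^2 = 0 := by
      by_contra hne
      have hpos : 0 < ‖T (y - ystar)‖^2 := lt_of_le_of_ne hs (Ne.symm hne)
      nlinarith [mul_pos hc hpos]
    have h3 : T (y - ystar) = 0 :=
      norm_eq_zero.1 ((pow_eq_zero_iff (by norm_num : (2:ℕ) ≠ 0)).1 h2)
    have h4 : y - ystar = 0 := hInj (by rw [h3, map_zero])
    exact sub_eq_zero.1 h4
end

section
/- Let K ≥ 2, d ≥ 1 and n₁, …, n_{K−1} ≥ 1 be integers. For k = 1, …, K−1 let T_k ∈ ℝ^{n_k×d} be a nonzero matrix satisfying T_kᵀ T_k = ‖T_k‖² I_d or T_k T_kᵀ = ‖T_k‖² I_{n_k} (with ‖T_k‖ the spectral norm), let b_k ∈ ℝ^{n_k} and b_K ∈ ℝ^d, and let g : ℝ → ℝ ∪ {+∞} be proper, convex and lower semicontinuous with one-dimensional proximity operator prox_g. Define the layer maps L_k : ℝ^d → ℝ^d by L_k(x) := ‖T_k‖^{−2} T_kᵀ σ(T_k x + b_k), where σ applies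 prox_g componentwise, and let Φ(x) := L_{K−1}(⋯ L_2(L_1(x)) ⋯) + b_K. Then Φ is (K−1)/K-averaged: there exists a map R : ℝ^d → ℝ^d that is nonexpansive with respect to the Euclidean norm such that Φ(x) = ((K−1)/K)·R(x) + (1/K)·x for all x ∈ ℝ^d. -/
open RealInnerProductSpace ContinuousLinearMap

/-- Composition of a finite family of maps: `iterComp m L = L (m−1) ∘ ⋯ ∘ L 1 ∘ L 0`. -/
def iterComp {E : Type*} : (m : ℕ) → (Fin m → (E → E)) → (E → E)
  | 0, _ => id
  | m + 1, L => L (Fin.last m) ∘ iterComp m (fun i => L i.castSucc)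

section PNNHelpers

/-- helper: `a ≤ t*c` for all `t ∈ (0,1]` with `c ≥ 0` implies `a ≤ 0`. -/
lemma PNN_le_zero_of_forall_le_mul {a c : ℝ} (hc : 0 ≤ c)
    (h : ∀ t : ℝ, 0 < t → t ≤ 1 → a ≤ t * c) : a ≤ 0 := by
  by_contra hpos
  push_neg at hpos
  have ht : (0:ℝ) < min 1 (a / (2 * (c + 1))) := by
    apply lt_min one_pos
    positivity
  have h2 := h _ ht (min_le_left _ _)
  have h3 : min 1 (a / (2 * (c + 1))) ≤ a / (2 * (c + 1)) := min_le_right _ _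
  have hc1 : (0:ℝ) < c + 1 := by linarith
  nlinarith [mul_le_mul_of_nonneg_right h3 hc,
    div_mul_cancel₀ a (ne_of_gt (by linarith : (0:ℝ) < 2*(c+1)))]

/-- The proximity operator of a proper convex function is firmly nonexpansive. -/
lemma PNN_prox_firm
    (g : ℝ → EReal)
    (hg_ne_bot : ∀ w : ℝ, g w ≠ ⊥) (hg_proper : ∃ w : ℝ, g w ≠ ⊤)
    (hg_convex : ∀ (w₁ w₂ : ℝ) (a c : ℝ), 0 ≤ a → 0 ≤ c → a + c = 1 →
      g (a * w₁ + c * w₂) ≤ (a : EReal) * g w₁ + (c : EReal) * g w₂)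
    (proxg : ℝ → ℝ)
    (hproxg : ∀ z w : ℝ,
      (((2⁻¹ * (z - proxg z) ^ 2 : ℝ) : EReal) + g (proxg z) ≤
        ((2⁻¹ * (z - w) ^ 2 : ℝ) : EReal) + g w) ∧
      (((2⁻¹ * (z - w) ^ 2 : ℝ) : EReal) + g w ≤
        ((2⁻¹ * (z - proxg z) ^ 2 : ℝ) : EReal) + g (proxg z) → w = proxg z))
    (z₁ z₂ : ℝ) :
    (proxg z₁ - proxg z₂) ^ 2 ≤ (proxg z₁ - proxg z₂) * (z₁ - z₂) := by
  obtain ⟨w₀, hw₀⟩ := hg_proper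
  set p₁ := proxg z₁ with hp₁
  set p₂ := proxg z₂ with hp₂
  have hfin : ∀ z : ℝ, g (proxg z) ≠ ⊤ := by
    intro z
    intro htop
    have h1 := (hproxg z w₀).1
    rw [htop] at h1
    have hL : ((2⁻¹ * (z - proxg z) ^ 2 : ℝ) : EReal) + ⊤ = ⊤ := by
      rw [EReal.add_top_iff_ne_bot]
      exact EReal.coe_ne_bot _
    rw [hL, top_le_iff] at h1
    have : ((2⁻¹ * (z - w₀) ^ 2 : ℝ) : EReal) + g w₀ < ⊤ :=
      EReal.add_lt_top (EReal.coe_ne_top _) hw₀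
    rw [h1] at this
    exact lt_irrefl _ this
  have main : ∀ (z q : ℝ), g q ≠ ⊤ →
      (q - proxg z) * (z - proxg z) ≤ (g q).toReal - (g (proxg z)).toReal := by
    intro z q hq
    set p := proxg z with hp
    set rp : ℝ := (g p).toReal with hrp
    set rq : ℝ := (g q).toReal with hrq
    have hgp : g p = (rp : EReal) := (EReal.coe_toReal (hfin z) (hg_ne_bot p)).symm
    have hgq : g q = (rq : EReal) := (EReal.coe_toReal hq (hg_ne_bot q)).symm
    have step : ∀ t : ℝ, 0 < t → t ≤ 1 →
        (q - p) * (z - p) - (rq - rp) ≤ t * ((q - p)^2 / 2) := by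
      intro t ht0 ht1
      have hconv := hg_convex p q (1 - t) t (by linarith) (le_of_lt ht0) (by ring)
      rw [hgp, hgq] at hconv
      have hcoe : ((1 - t : ℝ) : EReal) * (rp : EReal) + ((t:ℝ) : EReal) * (rq : EReal)
          = (((1-t) * rp + t * rq : ℝ) : EReal) := by
        rw [← EReal.coe_mul, ← EReal.coe_mul, ← EReal.coe_add]
      rw [hcoe] at hconv
      have hmin := (hproxg z ((1 - t) * p + t * q)).1
      rw [hgp] at hmin
      have hmin2 : ((2⁻¹ * (z - p) ^ 2 : ℝ) : EReal) + (rp : EReal) ≤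
          ((2⁻¹ * (z - ((1-t)*p + t*q)) ^ 2 : ℝ) : EReal) + (((1-t) * rp + t * rq : ℝ) : EReal) :=
        le_trans hmin (add_le_add (le_refl _) hconv)
      rw [← EReal.coe_add, ← EReal.coe_add, EReal.coe_le_coe_iff] at hmin2
      nlinarith [hmin2]
    have := PNN_le_zero_of_forall_le_mul (by positivity : (0:ℝ) ≤ (q-p)^2/2) step
    linarith
  have h1 := main z₁ p₂ (hfin z₂)
  have h2 := main z₂ p₁ (hfin z₁)
  have h2' : (p₁ - p₂) * (z₂ - p₂) ≤ (g p₁).toReal - (g p₂).toReal := h2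
  nlinarith [h1, h2']

variable {E : Type*} [NormedAddCommGroup E] [InnerProductSpace ℝ E]

/-- `m`-scaled averagedness: `F` is `m/(m+1)`-averaged. -/
def PNNIsAvg (m : ℝ) (F : E → E) : Prop := ∀ x y : E,
  m * ‖F x - F y‖^2 + ‖(x - y) - (F x - F y)‖^2 ≤ m * ‖x - y‖^2

lemma PNNIsAvg_of_firm {F : E → E}
    (h : ∀ x y : E, ‖F x - F y‖^2 ≤ ⟪F x - F y, x - y⟫) : PNNIsAvg 1 F := by
  intro x y
  have h1 := h x y
  have h2 := norm_sub_sq_real (x - y) (F x - F y)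
  have h3 := real_inner_comm (F x - F y) (x - y)
  linarith

lemma PNNIsAvg.comp {m : ℝ} (hm : 1 ≤ m) {F G : E → E}
    (hF : PNNIsAvg m F) (hG : PNNIsAvg 1 G) : PNNIsAvg (m + 1) (G ∘ F) := by
  intro x y
  have hFxy := hF x y
  have hGxy := hG (F x) (F y)
  set u := x - y
  set v := F x - F y
  set w := G (F x) - G (F y)
  show (m+1) * ‖w‖^2 + ‖u - w‖^2 ≤ (m+1) * ‖u‖^2
  have hA : m * ‖v‖^2 + ‖u - v‖^2 ≤ m * ‖u‖^2 := hFxy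
  have hB : 1 * ‖w‖^2 + ‖v - w‖^2 ≤ 1 * ‖v‖^2 := hGxy
  have hC : (0:ℝ) ≤ ‖(u - v) - m • (v - w)‖^2 := sq_nonneg _
  have euv : ‖u - v‖^2 = ‖u‖^2 - 2 * ⟪u, v⟫ + ‖v‖^2 := norm_sub_sq_real u v
  have evw : ‖v - w‖^2 = ‖v‖^2 - 2 * ⟪v, w⟫ + ‖w‖^2 := norm_sub_sq_real v w
  have euw : ‖u - w‖^2 = ‖u‖^2 - 2 * ⟪u, w⟫ + ‖w‖^2 := norm_sub_sq_real u w
  have eC : ‖(u - v) - m • (v - w)‖^2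
      = ‖u - v‖^2 - 2 * (m * ⟪u - v, v - w⟫) + m^2 * ‖v - w‖^2 := by
    rw [norm_sub_sq_real, real_inner_smul_right, norm_smul, mul_pow, Real.norm_eq_abs, sq_abs]
  have eI : ⟪u - v, v - w⟫ = ⟪u, v⟫ - ⟪u, w⟫ - ‖v‖^2 + ⟪v, w⟫ := by
    simp [inner_sub_left, inner_sub_right, real_inner_self_eq_norm_sq]
    ring
  rw [eI, euv, evw] at eC
  rw [eC] at hC
  rw [euv] at hA
  rw [evw] at hB
  rw [euw]
  have hm0 : (0:ℝ) < m := by linarith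
  nlinarith [mul_le_mul_of_nonneg_left hA (by linarith : (0:ℝ) ≤ 1 + m),
    mul_le_mul_of_nonneg_left hB (by positivity : (0:ℝ) ≤ m * (1 + m)), hC]

lemma PNNIsAvg_iterComp : ∀ (m : ℕ), 1 ≤ m → ∀ (L : Fin m → (E → E)),
    (∀ k, PNNIsAvg 1 (L k)) → PNNIsAvg (m : ℝ) (iterComp m L) := by
  intro m
  induction m with
  | zero => omega
  | succ m ih =>
    intro _ L hL
    rcases Nat.eq_or_lt_of_le (Nat.one_le_iff_ne_zero.mpr (Nat.succ_ne_zero m)) with h1 | h1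
    · have hm : m = 0 := by omega
      subst hm
      intro x y
      have := hL (Fin.last 0) x y
      simpa [iterComp] using this
    · have hm1 : 1 ≤ m := by omega
      have hF := ih hm1 (fun i => L i.castSucc) (fun i => hL i.castSucc)
      have hG := hL (Fin.last m)
      have hcomp := PNNIsAvg.comp (by exact_mod_cast hm1) hF hG
      have hc : ((m:ℝ) + 1) = ((m + 1 : ℕ) : ℝ) := by push_cast; ring
      rw [hc] at hcomp
      exact hcomp

lemma PNN_sigma_firm {n : ℕ} (proxg : ℝ → ℝ)
    (hfirm : ∀ z₁ z₂ : ℝ, (proxg z₁ - proxg z₂)^2 ≤ (proxg z₁ - proxg z₂) * (z₁ - z₂))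
    (σ : EuclideanSpace ℝ (Fin n) → EuclideanSpace ℝ (Fin n))
    (hσ : ∀ z i, σ z i = proxg (z i))
    (u v : EuclideanSpace ℝ (Fin n)) :
    ‖σ u - σ v‖^2 ≤ ⟪σ u - σ v, u - v⟫ := by
  rw [← real_inner_self_eq_norm_sq, PiLp.inner_apply, PiLp.inner_apply]
  apply Finset.sum_le_sum
  intro i _
  have h := hfirm (u i) (v i)
  simp only [RCLike.inner_apply, conj_trivial, PiLp.sub_apply, hσ]
  nlinarith [h]

lemma PNN_layer_firm {d m : ℕ} (T : EuclideanSpace ℝ (Fin d) →L[ℝ] EuclideanSpace ℝ (Fin m))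
    (hT : T ≠ 0) (b : EuclideanSpace ℝ (Fin m)) (proxg : ℝ → ℝ)
    (hfirm : ∀ z₁ z₂ : ℝ, (proxg z₁ - proxg z₂)^2 ≤ (proxg z₁ - proxg z₂) * (z₁ - z₂))
    (σ : EuclideanSpace ℝ (Fin m) → EuclideanSpace ℝ (Fin m))
    (hσ : ∀ z i, σ z i = proxg (z i))
    (L : EuclideanSpace ℝ (Fin d) → EuclideanSpace ℝ (Fin d))
    (hL : ∀ x, L x = (‖T‖^2)⁻¹ • (adjoint T) (σ (T x + b))) :
    ∀ x y, ‖L x - L y‖^2 ≤ ⟪L x - L y, x - y⟫ := by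
  intro x y
  have hc : (0:ℝ) < ‖T‖^2 := by
    have := norm_pos_iff.mpr hT
    positivity
  set c := ‖T‖^2 with hcdef
  set p : EuclideanSpace ℝ (Fin m) := σ (T x + b) - σ (T y + b) with hpd
  have hdiff : L x - L y = c⁻¹ • (adjoint T) p := by
    rw [hL x, hL y, ← smul_sub, ← map_sub]
  have hfp : ‖p‖^2 ≤ ⟪p, (T x + b) - (T y + b)⟫ := PNN_sigma_firm proxg hfirm σ hσ _ _
  have hTxy : (T x + b) - (T y + b) = T (x - y) := by
    rw [map_sub]; abel
  have hadj_norm : ‖(adjoint T) p‖ ≤ ‖T‖ * ‖p‖ := by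
    calc ‖(adjoint T) p‖ ≤ ‖adjoint T‖ * ‖p‖ := (adjoint T).le_opNorm p
    _ = ‖T‖ * ‖p‖ := by rw [adjoint.norm_map]
  have h1 : ‖L x - L y‖^2 ≤ c⁻¹ * ‖p‖^2 := by
    rw [hdiff, norm_smul, Real.norm_eq_abs, abs_of_pos (by positivity)]
    have h2 : ‖(adjoint T) p‖^2 ≤ c * ‖p‖^2 := by
      rw [hcdef]
      nlinarith [norm_nonneg ((adjoint T) p), norm_nonneg p, norm_nonneg T, hadj_norm]
    calc (c⁻¹ * ‖(adjoint T) p‖)^2 = c⁻¹ * c⁻¹ * ‖(adjoint T) p‖^2 := by ring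
    _ ≤ c⁻¹ * c⁻¹ * (c * ‖p‖^2) := by
        apply mul_le_mul_of_nonneg_left h2 (by positivity)
    _ = c⁻¹ * ‖p‖^2 := by field_simp
  have h3 : ⟪L x - L y, x - y⟫ = c⁻¹ * ⟪p, T (x - y)⟫ := by
    rw [hdiff, real_inner_smul_left, adjoint_inner_left]
  rw [h3, ← hTxy]
  calc ‖L x - L y‖^2 ≤ c⁻¹ * ‖p‖^2 := h1
  _ ≤ c⁻¹ * ⟪p, (T x + b) - (T y + b)⟫ := mul_le_mul_of_nonneg_left hfp (by positivity)

end PNNHelpers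

/-- Let `K ≥ 2`, `d ≥ 1`, `n_k ≥ 1`, and for `k = 1, …, K−1` let
`T_k ∈ ℝ^{n_k×d}` be nonzero with `T_kᵀT_k = ‖T_k‖²I` or `T_kT_kᵀ = ‖T_k‖²I`, let `b_k` be
bias vectors and `g : ℝ → ℝ ∪ {+∞}` proper, convex, lower semicontinuous with proximity
operator `prox_g`. With layers `L_k(x) := ‖T_k‖⁻² T_kᵀ σ(T_k x + b_k)` (σ = componentwise
`prox_g`) and `Φ(x) := L_{K−1}(⋯L_1(x)⋯) + b_K`, the map `Φ` is `(K−1)/K`-averaged: there is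
a nonexpansive `R` with `Φ = ((K−1)/K)·R + (1/K)·Id`. -/
theorem PNN_tight_frame_averaged
    (K d : ℕ) (hK : 2 ≤ K) (hd : 1 ≤ d)
    (n : Fin (K - 1) → ℕ) (hn : ∀ k, 1 ≤ n k)
    (T : ∀ k : Fin (K - 1), EuclideanSpace ℝ (Fin d) →L[ℝ] EuclideanSpace ℝ (Fin (n k)))
    (hT_ne : ∀ k, T k ≠ 0)
    (hT_tight : ∀ k,
      adjoint (T k) ∘L T k = (‖T k‖ ^ 2 : ℝ) • ContinuousLinearMap.id ℝ (EuclideanSpace ℝ (Fin d)) ∨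
      T k ∘L adjoint (T k) = (‖T k‖ ^ 2 : ℝ) • ContinuousLinearMap.id ℝ (EuclideanSpace ℝ (Fin (n k))))
    (b : ∀ k : Fin (K - 1), EuclideanSpace ℝ (Fin (n k)))
    (bK : EuclideanSpace ℝ (Fin d))
    -- `g` is proper, convex and lower semicontinuous with values in `ℝ ∪ {+∞}`:
    (g : ℝ → EReal)
    (hg_ne_bot : ∀ w : ℝ, g w ≠ ⊥) (hg_proper : ∃ w : ℝ, g w ≠ ⊤)
    (hg_convex : ∀ (w₁ w₂ : ℝ) (a c : ℝ), 0 ≤ a → 0 ≤ c → a + c = 1 →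
      g (a * w₁ + c * w₂) ≤ (a : EReal) * g w₁ + (c : EReal) * g w₂)
    (hg_lsc : LowerSemicontinuous g)
    -- `proxg z` is the unique minimizer over `w` of `½(z − w)² + g(w)`:
    (proxg : ℝ → ℝ)
    (hproxg : ∀ z w : ℝ,
      (((2⁻¹ * (z - proxg z) ^ 2 : ℝ) : EReal) + g (proxg z) ≤
        ((2⁻¹ * (z - w) ^ 2 : ℝ) : EReal) + g w) ∧
      (((2⁻¹ * (z - w) ^ 2 : ℝ) : EReal) + g w ≤
        ((2⁻¹ * (z - proxg z) ^ 2 : ℝ) : EReal) + g (proxg z) → w = proxg z))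
    -- the layers and the network:
    (L : Fin (K - 1) → (EuclideanSpace ℝ (Fin d) → EuclideanSpace ℝ (Fin d)))
    (hL : ∀ k x, L k x =
      (‖T k‖ ^ 2)⁻¹ • (adjoint (T k)) (WithLp.toLp 2 (fun i => proxg ((T k x + b k) i))))
    (Φ : EuclideanSpace ℝ (Fin d) → EuclideanSpace ℝ (Fin d))
    (hΦ : ∀ x, Φ x = iterComp (K - 1) L x + bK) :
    ∃ R : EuclideanSpace ℝ (Fin d) → EuclideanSpace ℝ (Fin d),
      LipschitzWith 1 R ∧
      ∀ x, Φ x = (((K : ℝ) - 1) / K) • R x + ((1 : ℝ) / K) • x := by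
  have hfirm := PNN_prox_firm g hg_ne_bot hg_proper hg_convex proxg hproxg
  -- each layer is firmly nonexpansive
  have hlayer : ∀ k, PNNIsAvg 1 (L k) := by
    intro k
    apply PNNIsAvg_of_firm
    apply PNN_layer_firm (T k) (hT_ne k) (b k) proxg hfirm
      (fun z => (WithLp.toLp 2 (fun i => proxg (z i)) : EuclideanSpace ℝ (Fin (n k))))
      (fun z i => rfl)
    intro x
    exact hL k x
  have hAvg : PNNIsAvg ((K - 1 : ℕ) : ℝ) (iterComp (K - 1) L) :=
    PNNIsAvg_iterComp (K - 1) (by omega) L hlayer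
  set F := iterComp (K - 1) L with hF
  set M : ℝ := ((K - 1 : ℕ) : ℝ) with hM
  have hM1 : (1:ℝ) ≤ M := by
    rw [hM]
    exact_mod_cast Nat.one_le_iff_ne_zero.mpr (by omega)
  have hM0 : (0:ℝ) < M := by linarith
  have hKM : (K : ℝ) = M + 1 := by
    rw [hM]
    push_cast [Nat.cast_sub (by omega : 1 ≤ K)]
    ring
  refine ⟨fun x => M⁻¹ • ((M + 1) • (F x + bK) - x), ?_, ?_⟩
  · -- Lipschitz
    apply LipschitzWith.of_dist_le_mul
    intro x y
    simp only [dist_eq_norm]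
    have hdiff : M⁻¹ • ((M + 1) • (F x + bK) - x) - M⁻¹ • ((M + 1) • (F y + bK) - y)
        = M⁻¹ • ((M + 1) • (F x - F y) - (x - y)) := by
      module
    rw [hdiff, norm_smul, Real.norm_eq_abs, abs_of_pos (by positivity)]
    set u := x - y
    set w := F x - F y
    have hz : ‖(M + 1) • w - u‖^2 = (M+1)^2 * ‖w‖^2 - 2 * ((M+1) * ⟪w, u⟫) + ‖u‖^2 := by
      rw [norm_sub_sq_real, real_inner_smul_left, norm_smul, mul_pow, Real.norm_eq_abs, sq_abs]
    have hA := hAvg x y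
    have hA' : M * ‖w‖^2 + ‖u - w‖^2 ≤ M * ‖u‖^2 := hA
    have euw : ‖u - w‖^2 = ‖u‖^2 - 2 * ⟪u, w⟫ + ‖w‖^2 := norm_sub_sq_real u w
    rw [euw] at hA'
    have hcomm : ⟪w, u⟫ = ⟪u, w⟫ := real_inner_comm u w
    have hsq : ‖(M + 1) • w - u‖^2 ≤ (M * ‖u‖)^2 := by
      rw [hz, hcomm]
      nlinarith [mul_le_mul_of_nonneg_left hA' (by linarith : (0:ℝ) ≤ M + 1)]
    have hle : ‖(M + 1) • w - u‖ ≤ M * ‖u‖ := by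
      nlinarith [hsq, norm_nonneg ((M + 1) • w - u), norm_nonneg u,
        mul_nonneg hM0.le (norm_nonneg u)]
    have : M⁻¹ * ‖(M + 1) • w - u‖ ≤ M⁻¹ * (M * ‖u‖) :=
      mul_le_mul_of_nonneg_left hle (by positivity)
    rw [inv_mul_cancel_left₀ (ne_of_gt hM0)] at this
    push_cast
    linarith
  · -- the averaged decomposition
    intro x
    rw [hΦ x, hKM]
    beta_reduce
    have hM1' : M + 1 ≠ 0 := by positivity
    match_scalars
    · field_simp
      ring
    · field_simp
      ring
    · field_simp
      ring
end

section
/- Let T ∈ ℝ^{n×d} with TᵀT = I_d and X ∈ ℝ^{n×d}. For Y ∈ ℝ^{n×d} define Ŵ(Y) := Y Tᵀ − ½ T (Tᵀ Y Tᵀ) and W(Y) := Ŵ(Y) − Ŵ(Y)ᵀ, and let P_T(X) := (I_n − T Tᵀ) X + ½ T (Tᵀ X − Xᵀ T) denote the orthogonal projection of X onto the tangent space of the Stiefel manifold St(d, n) at T. Then W(X) = W(P_T(X)); consequently, whenever I_n − ½W(X) is invertible, the Cayley retraction R_T(X) := (I_n − ½W(X))⁻¹(I_n + ½W(X)) T satisfies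 R_T(X) = R_T(P_T(X)). -/
open Matrix

/-- Let `T ∈ ℝ^{n×d}` with `TᵀT = I_d` and `X ∈ ℝ^{n×d}`. With
`Ŵ(Y) := Y Tᵀ − ½ T (Tᵀ Y Tᵀ)`, `W(Y) := Ŵ(Y) − Ŵ(Y)ᵀ`, and the tangent-space projection
`P_T(X) := (I − T Tᵀ) X + ½ T (Tᵀ X − Xᵀ T)`, one has `W(X) = W(P_T(X))`; consequently,
whenever `I − ½W(X)` is invertible, the Cayley retraction
`R_T(X) := (I − ½W(X))⁻¹ (I + ½W(X)) T` satisfies `R_T(X) = R_T(P_T(X))`. -/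
theorem cayley_retraction_eq_on_projection {n d : ℕ}
    (T : Matrix (Fin n) (Fin d) ℝ) (hT : Tᵀ * T = 1) (X : Matrix (Fin n) (Fin d) ℝ)
    (What : Matrix (Fin n) (Fin d) ℝ → Matrix (Fin n) (Fin n) ℝ)
    (hWhat : ∀ Y, What Y = Y * Tᵀ - (2⁻¹ : ℝ) • (T * (Tᵀ * Y * Tᵀ)))
    (W : Matrix (Fin n) (Fin d) ℝ → Matrix (Fin n) (Fin n) ℝ)
    (hW : ∀ Y, W Y = What Y - (What Y)ᵀ)
    (PT : Matrix (Fin n) (Fin d) ℝ → Matrix (Fin n) (Fin d) ℝ)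
    (hPT : ∀ Y, PT Y = (1 - T * Tᵀ) * Y + (2⁻¹ : ℝ) • (T * (Tᵀ * Y - Yᵀ * T))) :
    W X = W (PT X) ∧
    (IsUnit (1 - (2⁻¹ : ℝ) • W X) →
      (1 - (2⁻¹ : ℝ) • W X)⁻¹ * (1 + (2⁻¹ : ℝ) • W X) * T =
        (1 - (2⁻¹ : ℝ) • W (PT X))⁻¹ * (1 + (2⁻¹ : ℝ) • W (PT X)) * T) := by
  have h1 : ∀ {m : Type} [Fintype m] (A : Matrix (Fin d) m ℝ), Tᵀ * (T * A) = A := by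
    intro m _ A; rw [← Matrix.mul_assoc, hT, Matrix.one_mul]
  have key : W X = W (PT X) := by
    simp only [hW, hWhat, hPT, transpose_sub, transpose_add, transpose_smul, transpose_mul,
      transpose_transpose, transpose_one, Matrix.mul_sub, Matrix.sub_mul, Matrix.mul_add,
      Matrix.add_mul, Matrix.one_mul, Matrix.mul_one, Matrix.mul_smul, Matrix.smul_mul,
      Matrix.mul_assoc, smul_sub, smul_add, h1]
    module
  exact ⟨key, fun _ => by rw [key]⟩
end
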